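/- Let E be a sequential effect space with an invertibility-preserving sequential product, i.e., (a ∘ b)⁻¹ = a⁻¹ ∘ b⁻¹ for all positive invertible a, b. Then the inverse map on positive invertible elements is an order anti-automorphism: a ≤ b if and only if b⁻¹ ≤ a⁻¹. -/
import Mathlib


/-- `x ≤ y` for a partially defined addition: there is `c` with `x + c` defined and `x + c = y`. -/
def pLe {E : Type*} (D : E → E → Prop) (add : E → E → E) (x y : E) : Prop :=
  ∃ c, D x c ∧ add x c = y

/-- An effect algebra: a partially defined commutative associative addition with zero,
the zero-one law and unique complements. `D a b` means "`a + b` is defined". -/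
structure EffectAlgebra (E : Type*) where
  D : E → E → Prop
  add : E → E → E
  zero : E
  one : E
  compl : E → E
  D_comm : ∀ {a b}, D a b → D b a
  add_comm' : ∀ {a b}, D a b → add a b = add b a
  D_assoc_left : ∀ {a b c}, D b c → D a (add b c) → D a b
  D_assoc : ∀ {a b c}, D b c → D a (add b c) → D (add a b) c
  add_assoc' : ∀ {a b c}, D b c → D a (add b c) → add a (add b c) = add (add a b) c
  D_zero : ∀ a, D a zero
  add_zero' : ∀ a, add a zero = a
  zero_one : ∀ {a}, D a one → a = zero
  D_compl : ∀ a, D a (compl a)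
  add_compl : ∀ a, add a (compl a) = one
  compl_unique : ∀ {a b}, D a b → add a b = one → b = compl a

namespace EffectAlgebra
variable {E : Type*} (EA : EffectAlgebra E)
/-- The canonical order of an effect algebra. -/
def le (a b : E) : Prop := pLe EA.D EA.add a b
end EffectAlgebra

/-- A sequential effect algebra (Gudder–Greechie): an effect algebra with a total
binary operation `seq` (the sequential product) satisfying the five axioms. -/
structure SEA (E : Type*) extends EffectAlgebra E where
  seq : E → E → E
  seq_D : ∀ {b c} (a : E), D b c → D (seq a b) (seq a c)
  seq_add : ∀ {b c} (a : E), D b c → seq a (add b c) = add (seq a b) (seq a c)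
  one_seq : ∀ a, seq one a = a
  seq_orth : ∀ {a b}, seq a b = zero → seq b a = zero
  seq_compl : ∀ {a b}, seq a b = seq b a → seq a (compl b) = seq (compl b) a
  seq_assoc : ∀ {a b}, seq a b = seq b a → ∀ c, seq a (seq b c) = seq (seq a b) c
  comm_seq : ∀ {a b c}, seq c a = seq a c → seq c b = seq b c →
    seq c (seq a b) = seq (seq a b) c
  comm_add : ∀ {a b c}, seq c a = seq a c → seq c b = seq b c → D a b →
    seq c (add a b) = seq (add a b) c

namespace SEA
variable {E : Type*} (SE : SEA E)
/-- The order of the underlying effect algebra. -/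
def le (a b : E) : Prop := pLe SE.D SE.add a b
end SEA

/-- A convex sequential effect algebra: a sequential effect algebra together with a
`[0,1]`-action (convex structure). -/
structure ConvexSEA (E : Type*) extends SEA E where
  smul : ℝ → E → E
  smul_D : ∀ {r s : ℝ} (a : E), 0 ≤ r → 0 ≤ s → r + s ≤ 1 → D (smul r a) (smul s a)
  smul_add_dist : ∀ {r s : ℝ} (a : E), 0 ≤ r → 0 ≤ s → r + s ≤ 1 →
    smul (r + s) a = add (smul r a) (smul s a)
  smul_mul : ∀ {r s : ℝ} (a : E), 0 ≤ r → r ≤ 1 → 0 ≤ s → s ≤ 1 →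
    smul (r * s) a = smul r (smul s a)
  zero_smul : ∀ a, smul 0 a = zero
  one_smul : ∀ a, smul 1 a = a
  smul_D_add : ∀ {r : ℝ} {a b : E}, 0 ≤ r → r ≤ 1 → D a b → D (smul r a) (smul r b)
  smul_add : ∀ {r : ℝ} {a b : E}, 0 ≤ r → r ≤ 1 → D a b →
    smul r (add a b) = add (smul r a) (smul r b)

/-- A sequential effect space: a convex σ-sequential effect algebra. Decreasing
sequences have infima (given by `inf`), which are preserved by the sequential
product, and under which commutation is stable. -/
structure SES (E : Type*) extends ConvexSEA E where
  inf : (ℕ → E) → E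
  inf_le : ∀ {f : ℕ → E}, (∀ n, pLe D add (f (n + 1)) (f n)) →
    ∀ n, pLe D add (inf f) (f n)
  le_inf : ∀ {f : ℕ → E}, (∀ n, pLe D add (f (n + 1)) (f n)) →
    ∀ x, (∀ n, pLe D add x (f n)) → pLe D add x (inf f)
  seq_inf : ∀ {f : ℕ → E} (b : E), (∀ n, pLe D add (f (n + 1)) (f n)) →
    seq b (inf f) = inf (fun n => seq b (f n))
  comm_inf : ∀ {f : ℕ → E} {b : E}, (∀ n, pLe D add (f (n + 1)) (f n)) →
    (∀ n, seq b (f n) = seq (f n) b) → seq b (inf f) = seq (inf f) b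

namespace SES
variable {E : Type*} (SE : SES E)
/-- The order of the underlying effect algebra of a sequential effect space. -/
def le (a b : E) : Prop := pLe SE.D SE.add a b
end SES

/-- The order unit space `V` associated to a sequential effect space, together with
the extension of the sequential product to the positive cone of `V`: `V` is an
Archimedean ordered real vector space with order unit `one`, whose unit interval,
with the restricted operations, is a sequential effect space (a convex σ-sequential
effect algebra), and `seq` is linear in its second argument and positively
homogeneous in its first. -/
structure OrderUnitSES (V : Type*) [AddCommGroup V] [PartialOrder V] [Module ℝ V] where
  one : V
  seq : V → V → V
  add_le_add : ∀ {a b : V} (c : V), a ≤ b → a + c ≤ b + c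
  smul_nonneg : ∀ {r : ℝ} {a : V}, 0 ≤ r → 0 ≤ a → 0 ≤ r • a
  orderUnit : ∀ v : V, ∃ n : ℕ, -((n : ℝ) • one) ≤ v ∧ v ≤ (n : ℝ) • one
  archimedean : ∀ v : V, (∀ n : ℕ, v ≤ (1 / ((n : ℝ) + 1)) • one) → v ≤ 0
  seq_add : ∀ a b c : V, seq a (b + c) = seq a b + seq a c
  seq_smul : ∀ (r : ℝ) (a b : V), seq a (r • b) = r • seq a b
  seq_homog : ∀ {r : ℝ} (a b : V), 0 ≤ r → seq (r • a) b = r • seq a b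
  one_seq : ∀ a : V, seq one a = a
  seq_pos : ∀ {a b : V}, 0 ≤ a → 0 ≤ b → 0 ≤ seq a b
  ses : SES {v : V // 0 ≤ v ∧ v ≤ one}
  ses_D : ∀ a b, ses.D a b ↔ a.1 + b.1 ≤ one
  ses_add : ∀ a b, ses.D a b → (ses.add a b).1 = a.1 + b.1
  ses_zero : ses.zero.1 = 0
  ses_one : ses.one.1 = one
  ses_compl : ∀ a, (ses.compl a).1 = one - a.1
  ses_smul : ∀ (r : ℝ) (a), 0 ≤ r → r ≤ 1 → (ses.smul r a).1 = r • a.1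
  ses_seq : ∀ a b, (ses.seq a b).1 = seq a.1 b.1

namespace InvAntitoneAux

variable {V : Type*} [AddCommGroup V] [PartialOrder V] [Module ℝ V] (OU : OrderUnitSES V)

lemma sub_nn (OU : OrderUnitSES V) {x y : V} (h : x ≤ y) : 0 ≤ y - x := by
  have := OrderUnitSES.add_le_add OU (-x) h
  simpa [sub_eq_add_neg] using this

lemma seq_mono {c x y : V} (hc : 0 ≤ c) (hxy : x ≤ y) : OU.seq c x ≤ OU.seq c y := by
  have hd : 0 ≤ OU.seq c (y - x) := OU.seq_pos hc (sub_nn OU hxy)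
  have hxy' : x + (y - x) = y := by abel
  have h2 : OU.seq c y = OU.seq c x + OU.seq c (y - x) := by
    rw [← hxy', OU.seq_add, hxy']
  have h3 := OrderUnitSES.add_le_add OU (OU.seq c x) hd
  rw [zero_add] at h3
  calc OU.seq c x ≤ OU.seq c (y - x) + OU.seq c x := h3
    _ = OU.seq c x + OU.seq c (y - x) := add_comm _ _
    _ = OU.seq c y := h2.symm

lemma one_nonneg : (0 : V) ≤ OU.one := OU.ses_one ▸ OU.ses.one.2.1

/-- scale a nonneg element into the unit interval -/
lemma scale (v : V) (hv : 0 ≤ v) :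
    ∃ r : ℝ, 0 < r ∧ 0 ≤ r • v ∧ r • v ≤ OU.one := by
  obtain ⟨n, -, hn⟩ := OU.orderUnit v
  refine ⟨1 / ((n : ℝ) + 1), by positivity, OU.smul_nonneg (by positivity) hv, ?_⟩
  have h1 : (1 / ((n : ℝ) + 1)) • v ≤ (1 / ((n : ℝ) + 1)) • ((n : ℝ) • OU.one) := by
    have h0 : 0 ≤ (1 / ((n : ℝ) + 1)) • ((n : ℝ) • OU.one) - (1 / ((n : ℝ) + 1)) • v := by
      rw [← smul_sub]
      exact OU.smul_nonneg (by positivity) (sub_nn OU hn)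
    have := OrderUnitSES.add_le_add OU ((1 / ((n : ℝ) + 1)) • v) h0
    simpa using this
  refine le_trans h1 ?_
  have h2 : (1 / ((n : ℝ) + 1)) • ((n : ℝ) • OU.one) = ((n : ℝ) / ((n : ℝ) + 1)) • OU.one := by
    rw [smul_smul]; ring_nf
  rw [h2]
  have h3 : 0 ≤ OU.one - ((n : ℝ) / ((n : ℝ) + 1)) • OU.one := by
    have : OU.one - ((n : ℝ) / ((n : ℝ) + 1)) • OU.one
        = (1 - (n : ℝ) / ((n : ℝ) + 1)) • OU.one := by
      rw [sub_smul, one_smul]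
    rw [this]
    refine OU.smul_nonneg ?_ (one_nonneg OU)
    have : (n : ℝ) / ((n : ℝ) + 1) ≤ 1 := by
      rw [div_le_one (by positivity)]; linarith
    linarith
  have := OrderUnitSES.add_le_add OU (((n : ℝ) / ((n : ℝ) + 1)) • OU.one) h3
  simpa using this

lemma seq_zero (c : V) : OU.seq c 0 = 0 := by
  have := OU.seq_smul 0 c 0
  simpa using this

/-- `a ∘ 1 = a` inside the unit-interval SEA. -/
lemma ses_seq_one (a : {v : V // 0 ≤ v ∧ v ≤ OU.one}) :
    OU.ses.seq a OU.ses.one = a := by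
  have h1 : OU.ses.seq a OU.ses.zero = OU.ses.zero := by
    apply Subtype.ext
    rw [OU.ses_seq, OU.ses_zero, seq_zero]
  have h2 : OU.ses.seq OU.ses.zero a = OU.ses.zero := OU.ses.seq_orth h1
  have h3 := OU.ses.seq_compl (h1.trans h2.symm)
  have hD : OU.ses.D OU.ses.zero OU.ses.one := OU.ses.D_comm (OU.ses.D_zero OU.ses.one)
  have hadd : OU.ses.add OU.ses.zero OU.ses.one = OU.ses.one := by
    rw [OU.ses.add_comm' hD, OU.ses.add_zero']
  have h4 : OU.ses.one = OU.ses.compl OU.ses.zero := OU.ses.compl_unique hD hadd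
  rw [h4, h3, ← h4, OU.ses.one_seq]

lemma seq_one {c : V} (hc : 0 ≤ c) : OU.seq c OU.one = c := by
  obtain ⟨r, hr, hrc, hrc1⟩ := scale OU c hc
  have h := congrArg Subtype.val (ses_seq_one OU ⟨r • c, hrc, hrc1⟩)
  rw [OU.ses_seq] at h
  have h' : OU.seq (r • c) OU.one = r • c := by
    simpa [OU.ses_one] using h
  rw [OU.seq_homog _ _ hr.le] at h'
  have := congrArg (fun x => r⁻¹ • x) h'
  simpa [inv_smul_smul₀ hr.ne'] using this

lemma seq_smul_smul (r s : ℝ) (hr : 0 ≤ r) (x y : V) :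
    OU.seq (r • x) (s • y) = (r * s) • OU.seq x y := by
  rw [OU.seq_smul, OU.seq_homog _ _ hr, smul_smul, mul_comm]

/-- associativity for commuting nonnegative elements, transported from the SEA axiom. -/
lemma seq_assocV {u v w : V} (hu : 0 ≤ u) (hv : 0 ≤ v) (hw : 0 ≤ w)
    (hcomm : OU.seq u v = OU.seq v u) :
    OU.seq u (OU.seq v w) = OU.seq (OU.seq u v) w := by
  obtain ⟨r, hr, hru, hru1⟩ := scale OU u hu
  obtain ⟨s, hs, hsv, hsv1⟩ := scale OU v hv
  obtain ⟨t, ht, htw, htw1⟩ := scale OU w hw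
  set u' : {x : V // 0 ≤ x ∧ x ≤ OU.one} := ⟨r • u, hru, hru1⟩ with hu'
  set v' : {x : V // 0 ≤ x ∧ x ≤ OU.one} := ⟨s • v, hsv, hsv1⟩ with hv'
  set w' : {x : V // 0 ≤ x ∧ x ≤ OU.one} := ⟨t • w, htw, htw1⟩ with hw'
  have hvu1 : u'.1 = r • u := rfl
  have hvv1 : v'.1 = s • v := rfl
  have hvw1 : w'.1 = t • w := rfl
  have hc' : OU.ses.seq u' v' = OU.ses.seq v' u' := by
    apply Subtype.ext
    rw [OU.ses_seq, OU.ses_seq, hvu1, hvv1,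
      seq_smul_smul OU r s hr.le, seq_smul_smul OU s r hs.le, hcomm, mul_comm]
  have ha := congrArg Subtype.val (OU.ses.seq_assoc hc' w')
  rw [OU.ses_seq, OU.ses_seq, OU.ses_seq, OU.ses_seq, hvu1, hvv1, hvw1] at ha
  rw [seq_smul_smul OU s t hs.le, OU.seq_smul, OU.seq_homog _ _ hr.le,
    seq_smul_smul OU r s hr.le, OU.seq_homog _ _ (by positivity : (0:ℝ) ≤ r * s),
    OU.seq_smul] at ha
  -- ha : (s*t) • (r • seq u (seq v w)) = (r*s) • (t • seq (seq u v) w)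
  have ha2 : (r * s * t) • OU.seq u (OU.seq v w) = (r * s * t) • OU.seq (OU.seq u v) w := by
    rw [smul_smul, smul_smul] at ha
    calc (r * s * t) • OU.seq u (OU.seq v w)
        = (s * t * r) • OU.seq u (OU.seq v w) := by ring_nf
      _ = (r * s * t) • OU.seq (OU.seq u v) w := ha
  have hk : (r * s * t) ≠ 0 := by positivity
  have h3 := congrArg (fun x => (r * s * t)⁻¹ • x) ha2
  simp only [inv_smul_smul₀ hk] at h3
  exact h3

lemma key {a b ai bi : V}
    (hpres : ∀ a b ai bi : V, 0 ≤ a → 0 ≤ b → 0 ≤ ai → 0 ≤ bi →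
      OU.seq a ai = OU.one → OU.seq ai a = OU.one →
      OU.seq b bi = OU.one → OU.seq bi b = OU.one →
      OU.seq (OU.seq a b) (OU.seq ai bi) = OU.one ∧
      OU.seq (OU.seq ai bi) (OU.seq a b) = OU.one)
    (ha : 0 ≤ a) (hb : 0 ≤ b) (hai : 0 ≤ ai) (hbi : 0 ≤ bi)
    (ha1 : OU.seq a ai = OU.one) (ha2 : OU.seq ai a = OU.one)
    (hb1 : OU.seq b bi = OU.one) (hb2 : OU.seq bi b = OU.one)
    (hab : a ≤ b) : bi ≤ ai := by
  have hone : OU.one ≤ OU.seq ai b := by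
    have := seq_mono OU hai hab
    rwa [ha2] at this
  obtain ⟨-, h2⟩ := hpres ai b a bi hai hb ha hbi ha2 ha1 hb1 hb2
  -- h2 : seq (seq a bi) (seq ai b) = one
  have hd0 : 0 ≤ OU.seq a bi := OU.seq_pos ha hbi
  have hd : OU.seq a bi ≤ OU.one := by
    calc OU.seq a bi = OU.seq (OU.seq a bi) OU.one := (seq_one OU hd0).symm
      _ ≤ OU.seq (OU.seq a bi) (OU.seq ai b) := seq_mono OU hd0 hone
      _ = OU.one := h2
  have hstep : OU.seq ai (OU.seq a bi) ≤ ai := by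
    calc OU.seq ai (OU.seq a bi) ≤ OU.seq ai OU.one := seq_mono OU hai hd
      _ = ai := seq_one OU hai
  have hassoc : OU.seq ai (OU.seq a bi) = bi := by
    rw [seq_assocV OU hai ha hbi (ha2.trans ha1.symm), ha2, OU.one_seq]
  rwa [hassoc] at hstep

end InvAntitoneAux

/-- If the sequential product of a sequential effect space preserves invertibility,
i.e. `(a ∘ b)⁻¹ = a⁻¹ ∘ b⁻¹` for all positive invertible `a, b`, then the inverse map
is an order anti-automorphism of the positive invertible elements:
`a ≤ b` if and only if `b⁻¹ ≤ a⁻¹`. -/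
theorem invPreserving_inverse_antitone {V : Type*} [AddCommGroup V]
    [PartialOrder V] [Module ℝ V] (OU : OrderUnitSES V)
    (hpres : ∀ a b ai bi : V, 0 ≤ a → 0 ≤ b → 0 ≤ ai → 0 ≤ bi →
      OU.seq a ai = OU.one → OU.seq ai a = OU.one →
      OU.seq b bi = OU.one → OU.seq bi b = OU.one →
      OU.seq (OU.seq a b) (OU.seq ai bi) = OU.one ∧
      OU.seq (OU.seq ai bi) (OU.seq a b) = OU.one)
    (a b ai bi : V) (ha : 0 ≤ a) (hb : 0 ≤ b) (hai : 0 ≤ ai) (hbi : 0 ≤ bi)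
    (ha1 : OU.seq a ai = OU.one) (ha2 : OU.seq ai a = OU.one)
    (hb1 : OU.seq b bi = OU.one) (hb2 : OU.seq bi b = OU.one) :
    a ≤ b ↔ bi ≤ ai := by
  constructor
  · exact InvAntitoneAux.key OU hpres ha hb hai hbi ha1 ha2 hb1 hb2
  · exact InvAntitoneAux.key OU hpres hbi hai hb ha hb2 hb1 ha2 ha1
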